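/- For every n ≥ 2, the operator W_n* on H² is universal in the sense of Rota: it is surjective and has infinite-dimensional kernel (hence satisfies the Caradus criterion). -/

import Mathlib

open scoped InnerProductSpace
open Filter ContinuousLinearMap

noncomputable section

/-- The Hardy space `H²` identified with `ℓ²(ℕ)` via Maclaurin coefficients. -/
abbrev H2 := lp (fun _ : ℕ => ℂ) 2

/-- `W` is the weighted composition operator `W_n f(z) = (1+z+⋯+z^{n-1}) f(z^n)`,
expressed in Maclaurin coefficients: `(W_n f)^(nk+j) = f^(k)` for `0 ≤ j ≤ n-1`. -/
def IsWn (n : ℕ) (W : H2 →L[ℂ] H2) : Prop :=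
  ∀ (f : H2) (k j : ℕ), j < n → (W f) (n * k + j) = f k

/-- Evaluation at a coordinate, as a linear map. -/
def evalL (m : ℕ) : H2 →ₗ[ℂ] ℂ where
  toFun f := f m
  map_add' f g := congrFun (lp.coeFn_add f g) m
  map_smul' c f := congrFun (lp.coeFn_smul c f) m

/-- For every `n ≥ 2`, `W_n*` is surjective with infinite-dimensional kernel, hence
universal for `H²` in the sense of Rota by the Caradus criterion. -/
theorem adjoint_universal (n : ℕ) (hn : 2 ≤ n) (W : H2 →L[ℂ] H2) (hW : IsWn n W) :
    Function.Surjective (ContinuousLinearMap.adjoint W) ∧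
      ¬ FiniteDimensional ℂ (LinearMap.ker (ContinuousLinearMap.adjoint W : H2 →ₗ[ℂ] H2)) := by
  haveI : NeZero n := ⟨by omega⟩
  have hn0 : (n : ℂ) ≠ 0 := by exact_mod_cast (by omega : n ≠ 0)
  -- key inner product identity : ⟪W f, W g⟫ = n ⟪f, g⟫
  have key : ∀ f g : H2, ⟪W f, W g⟫_ℂ = (n : ℂ) * ⟪f, g⟫_ℂ := by
    intro f g
    have h1 : ∀ p : ℕ × Fin n,
        ⟪(W f) ((Nat.divModEquiv n).symm p), (W g) ((Nat.divModEquiv n).symm p)⟫_ℂ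
          = ⟪f p.1, g p.1⟫_ℂ := by
      intro p
      simp only [Nat.divModEquiv_symm_apply]
      rw [mul_comm p.1 n, hW f p.1 p.2 p.2.is_lt, hW g p.1 p.2 p.2.is_lt]
    have hs : Summable fun i : ℕ => ⟪(W f) i, (W g) i⟫_ℂ := lp.summable_inner _ _
    have hs2 : Summable fun p : ℕ × Fin n => ⟪f p.1, g p.1⟫_ℂ := by
      have := ((Nat.divModEquiv n).symm.summable_iff
        (f := fun i : ℕ => ⟪(W f) i, (W g) i⟫_ℂ)).2 hs
      rwa [show ((fun i : ℕ => ⟪(W f) i, (W g) i⟫_ℂ) ∘ (Nat.divModEquiv n).symm)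
        = fun p : ℕ × Fin n => ⟪f p.1, g p.1⟫_ℂ from funext h1] at this
    rw [lp.inner_eq_tsum, lp.inner_eq_tsum]
    calc ∑' i : ℕ, ⟪(W f) i, (W g) i⟫_ℂ
        = ∑' p : ℕ × Fin n,
            ⟪(W f) ((Nat.divModEquiv n).symm p), (W g) ((Nat.divModEquiv n).symm p)⟫_ℂ :=
          ((Nat.divModEquiv n).symm.tsum_eq _).symm
      _ = ∑' p : ℕ × Fin n, ⟪f p.1, g p.1⟫_ℂ := tsum_congr h1
      _ = ∑' k : ℕ, ∑' _j : Fin n, ⟪f k, g k⟫_ℂ := Summable.tsum_prod' hs2 fun _ => .of_finite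
      _ = ∑' k : ℕ, (n : ℂ) * ⟪f k, g k⟫_ℂ := by
          refine tsum_congr fun k => ?_
          rw [tsum_fintype]
          simp [Finset.sum_const, nsmul_eq_mul]
      _ = (n : ℂ) * ∑' k : ℕ, ⟪f k, g k⟫_ℂ := tsum_mul_left
  -- hence W* W = n • id
  have hWW : ∀ g : H2, ContinuousLinearMap.adjoint W (W g) = (n : ℂ) • g := by
    intro g
    refine ext_inner_left ℂ fun f => ?_
    rw [ContinuousLinearMap.adjoint_inner_right, inner_smul_right, key]
  constructor
  · intro g
    refine ⟨(n : ℂ)⁻¹ • W g, ?_⟩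
    rw [map_smul, hWW, smul_smul, inv_mul_cancel₀ hn0, one_smul]
  · -- the kernel contains the independent family e_{nk} - e_{nk+1}
    set v : ℕ → H2 := fun k => lp.single 2 (n * k) 1 - lp.single 2 (n * k + 1) 1 with hv
    have hvker : ∀ k, v k ∈ LinearMap.ker (ContinuousLinearMap.adjoint W : H2 →ₗ[ℂ] H2) := by
      intro k
      rw [LinearMap.mem_ker, ContinuousLinearMap.coe_coe]
      refine ext_inner_right ℂ fun f => ?_
      rw [ContinuousLinearMap.adjoint_inner_left, inner_zero_left, hv]
      rw [inner_sub_left, lp.inner_single_left, lp.inner_single_left]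
      have h0 : (W f) (n * k) = f k := by
        have := hW f k 0 (by omega); simpa using this
      have h1 : (W f) (n * k + 1) = f k := hW f k 1 (by omega)
      rw [h0, h1, sub_self]
    have happ : ∀ j i : ℕ, v j (n * i) = if i = j then 1 else 0 := by
      intro j i
      have hne : n * i ≠ n * j + 1 := by
        intro h
        have h2 : n * i % n = (n * j + 1) % n := by rw [h]
        rw [Nat.mul_mod_right, Nat.add_comm, Nat.add_mul_mod_self_left,
          Nat.mod_eq_of_lt (by omega)] at h2
        omega
      have : v j (n * i) = lp.single (E := fun _ : ℕ => ℂ) 2 (n * j) 1 (n * i) -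
          lp.single (E := fun _ : ℕ => ℂ) 2 (n * j + 1) 1 (n * i) := by
        rw [hv]
        have := lp.coeFn_sub (lp.single (E := fun _ : ℕ => ℂ) 2 (n * j) 1)
          (lp.single (E := fun _ : ℕ => ℂ) 2 (n * j + 1) 1)
        exact congrFun this (n * i)
      rw [this, lp.single_apply_ne 2 _ _ hne, lp.single_apply, sub_zero]
      by_cases h : i = j
      · subst h; simp
      · rw [Pi.single_apply, if_neg (by
          intro hc
          exact h (Nat.eq_of_mul_eq_mul_left (by omega) hc)), if_neg h]
    have hli : LinearIndependent ℂ v := by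
      rw [linearIndependent_iff']
      intro s g hsum i hi
      have := congrArg (evalL (n * i)) hsum
      rw [map_sum, map_zero] at this
      have hterm : ∀ j ∈ s, evalL (n * i) (g j • v j) = if j = i then g i else 0 := by
        intro j _
        rw [map_smul]
        show g j • (v j) (n * i) = _
        rw [happ]
        by_cases h : j = i
        · subst h; simp
        · rw [if_neg (fun hc => h hc.symm), if_neg h, smul_zero]
      rw [show ∑ j ∈ s, evalL (n * i) (g j • v j)
          = ∑ j ∈ s, if j = i then g i else 0 from Finset.sum_congr rfl hterm,
        Finset.sum_ite_eq' s i (fun _ => g i), if_pos hi] at this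
      exact this
    intro hfin
    have hli2 : LinearIndependent ℂ
        (fun k => (⟨v k, hvker k⟩ : LinearMap.ker (ContinuousLinearMap.adjoint W : H2 →ₗ[ℂ] H2))) :=
      hli.of_comp (LinearMap.ker (ContinuousLinearMap.adjoint W : H2 →ₗ[ℂ] H2)).subtype
    have := hli2.finite
    exact not_finite ℕ
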